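/- Let C be a polygonal curve in ℝ^d with three vertices p_0, p_1, p_2 such that p_2 lies on the line segment from p_0 to p_1, with d := ‖p_2 − p_0‖ > 0, and suppose L(C) = n·d for some positive integer n. Then the n-th iterated arclength respacing f^n(C) is equilateral, while f^j(C) is not equilateral for any 0 ≤ j < n. -/

import Mathlib

open Finset Filter

noncomputable section

/-- The length of the polygonal curve with vertices `p 0, …, p m`
(also the arclength distance from `p 0` to `p m` along the curve). -/
def polyLength {dim : ℕ} (p : ℕ → EuclideanSpace ℝ (Fin dim)) (m : ℕ) : ℝ :=
  ∑ i ∈ Finset.range m, ‖p (i + 1) - p i‖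

/-- `P` is the arclength-parameterized linear interpolation of the polygonal
curve with vertices `p 0, …, p m`:
`P ((1-t)·d_{k-1} + t·d_k) = (1-t)·p_{k-1} + t·p_k` for `t ∈ [0,1]`, `k = 1, …, m`,
where `d_k = polyLength p k` is the arclength up to vertex `k`. -/
def IsArcParam {dim : ℕ} (p : ℕ → EuclideanSpace ℝ (Fin dim)) (m : ℕ)
    (P : ℝ → EuclideanSpace ℝ (Fin dim)) : Prop :=
  ∀ k : ℕ, 1 ≤ k → k ≤ m → ∀ t : ℝ, 0 ≤ t → t ≤ 1 →
    P ((1 - t) * polyLength p (k - 1) + t * polyLength p k)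
      = (1 - t) • p (k - 1) + t • p k

/-- The polygonal curve with vertices `p 0, …, p m` is equilateral:
all consecutive interpoint distances agree. -/
def IsEquilateral {dim : ℕ} (p : ℕ → EuclideanSpace ℝ (Fin dim)) (m : ℕ) : Prop :=
  ∀ k l : ℕ, 1 ≤ k → k ≤ m → 1 ≤ l → l ≤ m →
    ‖p k - p (k - 1)‖ = ‖p l - p (l - 1)‖

/-- `q 0, …, q m` are the vertices of the arclength respacing `f(C)` of the
polygonal curve `C` with vertices `p 0, …, p m`:
`q k = P (k·L(C)/m)` where `P` is the arclength parameterization of `C`;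
by convention `f(C) := C` when `L(C) = 0`. -/
def Respaces {dim : ℕ} (m : ℕ) (p q : ℕ → EuclideanSpace ℝ (Fin dim)) : Prop :=
  (polyLength p m = 0 ∧ ∀ k ≤ m, q k = p k) ∨
  (0 < polyLength p m ∧ ∃ P : ℝ → EuclideanSpace ℝ (Fin dim), IsArcParam p m P ∧
    ∀ k ≤ m, q k = P ((k : ℝ) * polyLength p m / m))

lemma norm_aff {dim : ℕ} (p0 v : EuclideanSpace ℝ (Fin dim)) (s u : ℝ) :
    ‖(p0 + s • v) - (p0 + u • v)‖ = |s - u| * ‖v‖ := by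
  have h : (p0 + s • v) - (p0 + u • v) = (s - u) • v := by module
  rw [h, norm_smul, Real.norm_eq_abs]

lemma step_lemma {dim : ℕ} (p0 v : EuclideanSpace ℝ (Fin dim)) (hv : 0 < ‖v‖)
    (r : ℝ) (hr : 1 ≤ r) (q q' : ℕ → EuclideanSpace ℝ (Fin dim))
    (h0 : q 0 = p0 + (0:ℝ) • v) (h1 : q 1 = p0 + r • v) (h2 : q 2 = p0 + (1:ℝ) • v)
    (hR : Respaces 2 q q') :
    q' 0 = p0 + (0:ℝ) • v ∧ q' 1 = p0 + (r - 1/2) • v ∧ q' 2 = p0 + (1:ℝ) • v := by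
  set d := ‖v‖ with hdd
  have hd0 : polyLength q 0 = 0 := by simp [polyLength]
  have hd1 : polyLength q 1 = r * d := by
    simp only [polyLength, Finset.sum_range_succ, Finset.sum_range_zero, zero_add, h0, h1]
    rw [norm_aff, abs_of_nonneg (by linarith : (0:ℝ) ≤ r - 0)]; rw [hdd]; ring
  have hd2 : polyLength q 2 = (2*r - 1) * d := by
    simp only [polyLength, Finset.sum_range_succ, Finset.sum_range_zero, zero_add, h0, h1, h2]
    rw [norm_aff, norm_aff, abs_of_nonneg (by linarith : (0:ℝ) ≤ r - 0),
      abs_of_nonpos (by linarith : (1:ℝ) - r ≤ 0)]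
    rw [hdd]; ring
  have hLpos : 0 < polyLength q 2 := by
    rw [hd2]; exact mul_pos (by linarith) hv
  rcases hR with ⟨hz, _⟩ | ⟨_, P, hP, hq'⟩
  · linarith
  have P0 : P 0 = p0 + (0:ℝ) • v := by
    have e := hP 1 le_rfl one_le_two 0 le_rfl zero_le_one
    simp only [show (1:ℕ) - 1 = 0 from rfl, hd0] at e
    simpa [h0] using e
  have PL : P (polyLength q 2) = p0 + (1:ℝ) • v := by
    have e := hP 2 one_le_two le_rfl 1 zero_le_one le_rfl
    simpa [h2] using e
  have hr2 : (0:ℝ) < 2 * r := by linarith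
  set t : ℝ := (2*r - 1) / (2*r) with ht
  have ht0 : 0 ≤ t := div_nonneg (by linarith) (by linarith)
  have ht1 : t ≤ 1 := by rw [div_le_one hr2]; linarith
  have PHalf : P (polyLength q 2 / 2) = p0 + (r - 1/2) • v := by
    have e := hP 1 le_rfl one_le_two t ht0 ht1
    simp only [show (1:ℕ) - 1 = 0 from rfl, hd0, hd1] at e
    have harg : (1 - t) * 0 + t * (r * d) = polyLength q 2 / 2 := by
      rw [hd2, ht]; field_simp; ring
    rw [harg, h0, h1] at e
    rw [e]
    have hc : t * r = r - 1/2 := by rw [ht]; field_simp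
    have : (1 - t) • (p0 + (0:ℝ) • v) + t • (p0 + r • v) = p0 + (t * r) • v := by module
    rw [this, hc]
  refine ⟨?_, ?_, ?_⟩
  · have e := hq' 0 (by norm_num)
    simpa [P0] using e
  · have e := hq' 1 (by norm_num)
    rw [show ((1:ℕ):ℝ) * polyLength q 2 / ((2:ℕ):ℝ) = polyLength q 2 / 2 by
      push_cast; ring, PHalf] at e
    exact e
  · have e := hq' 2 le_rfl
    rw [show ((2:ℕ):ℝ) * polyLength q 2 / ((2:ℕ):ℝ) = polyLength q 2 by
      push_cast; ring, PL] at e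
    exact e

/-- A three-vertex polygonal curve with `p 2` on the segment from `p 0` to
`p 1`, `d = ‖p 2 - p 0‖ > 0` and `L(C) = n·d` becomes equilateral precisely at
iteration `n` of arclength respacing. -/
theorem stmt16 {dim : ℕ} (p : ℕ → EuclideanSpace ℝ (Fin dim))
    (hseg : p 2 ∈ segment ℝ (p 0) (p 1))
    (hd : 0 < ‖p 2 - p 0‖)
    (n : ℕ) (hn : 0 < n)
    (hLn : polyLength p 2 = (n : ℝ) * ‖p 2 - p 0‖)
    (c : ℕ → ℕ → EuclideanSpace ℝ (Fin dim))
    (hc0 : ∀ k ≤ 2, c 0 k = p k)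
    (hstep : ∀ j, Respaces 2 (c j) (c (j + 1))) :
    IsEquilateral (c n) 2 ∧ ∀ j < n, ¬ IsEquilateral (c j) 2 := by
  set v := p 2 - p 0 with hv
  set d := ‖v‖ with hdd
  obtain ⟨a, b, ha, hb, hab, habp⟩ := hseg
  have haeq : a = 1 - b := by linarith
  subst haeq
  have hb0 : b ≠ 0 := by
    intro h
    subst h
    simp at habp
    have : d = 0 := by rw [hdd, hv, ← habp, sub_self, norm_zero]
    linarith
  have hbpos : 0 < b := lt_of_le_of_ne hb (Ne.symm hb0)
  have hble : b ≤ 1 := by linarith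
  have hbv : b • (p 1 - p 0) = v := by rw [hv, ← habp]; module
  have hp1 : p 1 = p 0 + (1/b) • v := by
    have h1 : (1/b) • (b • (p 1 - p 0)) = (1/b) • v := by rw [hbv]
    rw [smul_smul, one_div, inv_mul_cancel₀ hb0, one_smul] at h1
    rw [one_div, ← h1]; abel
  have h1b : 1 ≤ 1/b := by rw [le_div_iff₀ hbpos]; linarith
  have hp2 : p 2 = p 0 + (1:ℝ) • v := by rw [hv]; module
  have hp0 : p 0 = p 0 + (0:ℝ) • v := by simp
  have hL0 : polyLength p 2 = (2/b - 1) * d := by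
    simp only [polyLength, Finset.sum_range_succ, Finset.sum_range_zero, zero_add]
    rw [hp1, hp2]
    have e1 : p 0 + (1/b) • v - p 0 = (1/b - 0) • v := by module
    have e2 : p 0 + (1:ℝ) • v - (p 0 + (1/b) • v) = (1 - 1/b) • v := by module
    rw [e1, e2, norm_smul, norm_smul, Real.norm_eq_abs, Real.norm_eq_abs,
      abs_of_nonneg (by linarith : (0:ℝ) ≤ 1/b - 0),
      abs_of_nonpos (by linarith : (1:ℝ) - 1/b ≤ 0)]
    rw [hdd]; ring
  have hbn : 1/b = ((n:ℝ) + 1) / 2 := by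
    rw [hL0] at hLn
    have : (2/b - 1) = (n:ℝ) := mul_right_cancel₀ (ne_of_gt hd) hLn
    rw [show (2:ℝ)/b = 2 * (1/b) by ring] at this
    linarith
  -- invariant
  have inv : ∀ j, j ≤ n → c j 0 = p 0 + (0:ℝ) • v ∧
      c j 1 = p 0 + (((n:ℝ) - j + 1)/2) • v ∧ c j 2 = p 0 + (1:ℝ) • v := by
    intro j
    induction j with
    | zero =>
      intro _
      refine ⟨by rw [hc0 0 (by norm_num)]; exact hp0, ?_, by rw [hc0 2 le_rfl]; exact hp2⟩
      rw [hc0 1 (by norm_num), hp1, hbn]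
      norm_num
    | succ j ih =>
      intro hjn
      have hj : j < n := Nat.lt_of_succ_le hjn
      obtain ⟨i0, i1, i2⟩ := ih (le_of_lt hj)
      have hjr : (j:ℝ) + 1 ≤ (n:ℝ) := by exact_mod_cast hj
      have hr : 1 ≤ ((n:ℝ) - j + 1)/2 := by linarith
      obtain ⟨s0, s1, s2⟩ := step_lemma (p 0) v hd _ hr (c j) (c (j+1)) i0 i1 i2 (hstep j)
      refine ⟨s0, ?_, s2⟩
      rw [s1]
      congr 1
      push_cast
      ring_nf
  constructor
  · obtain ⟨h0, h1, h2⟩ := inv n le_rfl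
    have hco : ((n:ℝ) - n + 1)/2 = 1/2 := by ring
    rw [hco] at h1
    have hA : ‖c n 1 - c n 0‖ = ‖c n 2 - c n 1‖ := by
      rw [h0, h1, h2, norm_aff, norm_aff]
      norm_num
    intro k l hk1 hk2 hl1 hl2
    interval_cases k <;> interval_cases l <;>
      first | rfl | exact hA | exact hA.symm
  · intro j hj hEq
    obtain ⟨i0, i1, i2⟩ := inv j (le_of_lt hj)
    have hjr : (j:ℝ) + 1 ≤ (n:ℝ) := by exact_mod_cast hj
    set r := ((n:ℝ) - j + 1)/2 with hrdef
    have hr : 1 ≤ r := by rw [hrdef]; linarith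
    have e := hEq 1 2 (by norm_num) (by norm_num) (by norm_num) (by norm_num)
    simp only [show (1:ℕ) - 1 = 0 from rfl, show (2:ℕ) - 1 = 1 from rfl] at e
    rw [i0, i1, i2, norm_aff, norm_aff, abs_of_nonneg (by linarith : (0:ℝ) ≤ r - 0),
      abs_of_nonpos (by linarith : (1:ℝ) - r ≤ 0)] at e
    have : d = 0 := by linear_combination e
    rw [this] at hd
    exact lt_irrefl 0 hd
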